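/- For A, B, a > 0 with real ν > -1/2 and A - B ≤ 1 (in the real setting), ∫₀^∞ I_ν(Ax) e^{-Bx} x^{-1/2} e^{-x} dx = (2^{-ν}/√(1+B)) (A²/(1+B)²)^{ν/2} (Γ(1/2+ν)/Γ(1+ν)) · ₂F₁((1+2ν)/4, (3+2ν)/4; 1+ν; A²/(1+B)²), where ₂F₁ is the Gauss hypergeometric function and I_ν the modified Bessel function of the first kind. -/

import Mathlib

open Real Finset MeasureTheory
open scoped ENNReal NNReal

/-- Modified Bessel function of the first kind (real version),
`I_ν(x) = Σ (1/(m! Γ(m+ν+1))) (x/2)^{2m+ν}`. -/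
noncomputable def besselI (ν : ℝ) (x : ℝ) : ℝ :=
  ∑' m : ℕ, (1 / ((m.factorial : ℝ) * Real.Gamma ((m : ℝ) + ν + 1))) *
    (x/2) ^ (2*(m:ℝ) + ν)

/-- The rising factorial (Pochhammer symbol) `(a)_k = a(a+1)⋯(a+k-1)`. -/
noncomputable def risingFac (a : ℝ) (k : ℕ) : ℝ := ∏ j ∈ Finset.range k, (a + j)

/-- The Gauss hypergeometric function `₂F₁(a,b;c;z)`. -/
noncomputable def hyp2F1 (a b c z : ℝ) : ℝ :=
  ∑' k : ℕ, risingFac a k * risingFac b k / (risingFac c k * (k.factorial : ℝ)) * z^k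

lemma risingFac_zero (a : ℝ) : risingFac a 0 = 1 := by simp [risingFac]
lemma risingFac_succ (a : ℝ) (k : ℕ) : risingFac a (k+1) = risingFac a k * (a + k) := by
  simp [risingFac, Finset.prod_range_succ]
lemma risingFac_pos {a : ℝ} (ha : 0 < a) (k : ℕ) : 0 < risingFac a k := by
  induction k with
  | zero => simp [risingFac_zero]
  | succ n ih => rw [risingFac_succ]; positivity
lemma Gamma_add_nat {a : ℝ} (ha : 0 < a) (k : ℕ) :
    Real.Gamma (a + k) = Real.Gamma a * risingFac a k := by
  induction k with
  | zero => simp [risingFac_zero]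
  | succ n ih =>
      have h1 : a + (n+1:ℕ) = (a + n) + 1 := by push_cast; ring
      have h2 : (a + (n:ℝ)) ≠ 0 := by positivity
      rw [h1, Real.Gamma_add_one h2, ih, risingFac_succ]; ring
lemma risingFac_two_mul (a : ℝ) (k : ℕ) :
    risingFac a (2*k) = 4^k * risingFac (a/2) k * risingFac ((a+1)/2) k := by
  induction k with
  | zero => simp [risingFac_zero]
  | succ n ih =>
      have : 2*(n+1) = (2*n) + 1 + 1 := by ring
      rw [this, risingFac_succ, risingFac_succ, ih, risingFac_succ, risingFac_succ]
      push_cast; ring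

lemma term_eq (A K ν : ℝ) (hA : 0 < A) (hK : 0 < K) (hν : -1/2 < ν) (m : ℕ) :
    (1 / ((m.factorial : ℝ) * Real.Gamma ((m:ℝ) + ν + 1))) * (A/2) ^ (2*(m:ℝ) + ν)
      * ((1/K) ^ (2*(m:ℝ) + ν + 1/2) * Real.Gamma (2*(m:ℝ) + ν + 1/2))
  = ((2:ℝ)^(-ν) / Real.sqrt K * (A^2/K^2)^(ν/2) * (Real.Gamma (1/2+ν)/Real.Gamma (1+ν))) *
    (risingFac ((1+2*ν)/4) m * risingFac ((3+2*ν)/4) m / (risingFac (1+ν) m * (m.factorial:ℝ))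
      * (A^2/K^2)^m) := by
  have hν2 : (0:ℝ) < ν + 1/2 := by linarith
  have hν1 : (0:ℝ) < 1 + ν := by linarith
  have hA2 : (0:ℝ) < A/2 := by linarith
  have hK' : (0:ℝ) < 1/K := by positivity
  -- Gamma rewrites
  have hG1 : Real.Gamma (2*(m:ℝ) + ν + 1/2)
      = Real.Gamma (ν + 1/2) * (4^m * risingFac ((1+2*ν)/4) m * risingFac ((3+2*ν)/4) m) := by
    have : 2*(m:ℝ) + ν + 1/2 = (ν + 1/2) + ((2*m : ℕ) : ℝ) := by push_cast; ring
    rw [this, Gamma_add_nat hν2, risingFac_two_mul]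
    have e1 : (ν + 1/2)/2 = (1+2*ν)/4 := by ring
    have e2 : (ν + 1/2 + 1)/2 = (3+2*ν)/4 := by ring
    rw [e1, e2]
  have hG2 : Real.Gamma ((m:ℝ) + ν + 1)
      = Real.Gamma (1 + ν) * risingFac (1+ν) m := by
    have : (m:ℝ) + ν + 1 = (1 + ν) + (m:ℕ) := by push_cast; ring
    rw [this, Gamma_add_nat hν1]
  -- rpow splits
  have hP1 : (A/2) ^ (2*(m:ℝ) + ν) = ((A/2)^2)^m * (A/2)^ν := by
    rw [Real.rpow_add hA2]
    congr 1
    rw [show (2*(m:ℝ)) = ((2*m : ℕ) : ℝ) by push_cast; ring, Real.rpow_natCast, pow_mul]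
  have hP2 : (1/K) ^ (2*(m:ℝ) + ν + 1/2) = ((1/K)^2)^m * ((1/K)^ν * (1/K)^((1:ℝ)/2)) := by
    rw [show (2*(m:ℝ) + ν + 1/2) = 2*(m:ℝ) + (ν + 1/2) by ring, Real.rpow_add hK',
      Real.rpow_add hK']
    rw [show (2*(m:ℝ)) = ((2*m : ℕ) : ℝ) by push_cast; ring, Real.rpow_natCast, pow_mul]
  have hP3 : ((A^2/K^2) : ℝ)^(ν/2) = A^ν / K^ν := by
    rw [show A^2/K^2 = (A/K)^2 by ring, ← Real.rpow_natCast (A/K) 2, ← Real.rpow_mul (by positivity)]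
    rw [show ((2:ℕ):ℝ) * (ν/2) = ν by push_cast; ring, Real.div_rpow hA.le hK.le]
  have hP4 : ((A/2):ℝ)^ν = A^ν / 2^ν := by
    rw [Real.div_rpow hA.le (by norm_num : (0:ℝ) ≤ 2)]
  have hP5 : ((1/K):ℝ)^ν = 1 / K^ν := by
    rw [Real.div_rpow (by norm_num) hK.le, Real.one_rpow]
  have hP6 : ((1/K):ℝ)^((1:ℝ)/2) = 1 / Real.sqrt K := by
    rw [Real.div_rpow (by norm_num) hK.le, Real.one_rpow, Real.sqrt_eq_rpow]
  have hP7 : (2:ℝ)^(-ν) = 1 / 2^ν := by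
    rw [Real.rpow_neg (by norm_num : (0:ℝ) ≤ 2), one_div]
  have hP8 : (A^2/K^2)^m = ((A/2)^2)^m * ((1/K)^2)^m * 4^m := by
    rw [← mul_pow, ← mul_pow]; congr 1; field_simp; ring
  have hGG : Real.Gamma (ν + 1/2) = Real.Gamma (1/2 + ν) := by ring_nf
  -- positivity of denominators
  have h1 : (0:ℝ) < (m.factorial : ℝ) := by positivity
  have h2 : (0:ℝ) < Real.Gamma (1 + ν) := Real.Gamma_pos_of_pos hν1
  have h3 : (0:ℝ) < risingFac (1+ν) m := risingFac_pos hν1 m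
  have h4 : (0:ℝ) < (2:ℝ)^ν := Real.rpow_pos_of_pos (by norm_num) ν
  have h5 : (0:ℝ) < K^ν := Real.rpow_pos_of_pos hK ν
  have h6 : (0:ℝ) < Real.sqrt K := Real.sqrt_pos.mpr hK
  rw [hG1, hG2, hP1, hP2, hP3, hP4, hP5, hP6, hP7, hP8, hGG]
  field_simp

lemma t_succ {a b c z : ℝ} (hc : 0 < c) (m : ℕ) :
    risingFac a (m+1) * risingFac b (m+1) / (risingFac c (m+1) * ((m+1).factorial:ℝ)) * z^(m+1)
    = (risingFac a m * risingFac b m / (risingFac c m * (m.factorial:ℝ)) * z^m)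
      * ((a+m)*(b+m)/((c+m)*((m:ℝ)+1)) * z) := by
  have h1 : risingFac c m ≠ 0 := (risingFac_pos hc m).ne'
  have h2 : ((m.factorial:ℝ)) ≠ 0 := by positivity
  have h3 : (c+(m:ℝ)) ≠ 0 := by positivity
  have h4 : ((m:ℝ)+1) ≠ 0 := by positivity
  rw [risingFac_succ, risingFac_succ, risingFac_succ, Nat.factorial_succ]
  push_cast
  field_simp
  ring

lemma hyp_summable {a b c z : ℝ} (ha : 0 < a) (hb : 0 < b) (hc : 0 < c)
    (hz0 : 0 < z) (hz1 : z < 1) :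
    Summable (fun m : ℕ => risingFac a m * risingFac b m /
      (risingFac c m * (m.factorial:ℝ)) * z^m) := by
  set t : ℕ → ℝ := fun m => risingFac a m * risingFac b m /
      (risingFac c m * (m.factorial:ℝ)) * z^m with ht
  have htpos : ∀ m, 0 < t m := by
    intro m
    have := risingFac_pos ha m; have := risingFac_pos hb m; have := risingFac_pos hc m
    have : (0:ℝ) < (m.factorial:ℝ) := by positivity
    simp only [ht]; positivity
  -- the ratio tends to z
  have l0 : Filter.Tendsto (fun m:ℕ => ((m:ℝ)+1)) Filter.atTop Filter.atTop :=
    Filter.tendsto_atTop_add_const_right _ _ tendsto_natCast_atTop_atTop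
  have l0' : Filter.Tendsto (fun m:ℕ => (c+(m:ℝ))) Filter.atTop Filter.atTop := by
    simpa [add_comm] using Filter.tendsto_atTop_add_const_left _ c (tendsto_natCast_atTop_atTop (R := ℝ))
  have l1 : Filter.Tendsto (fun m:ℕ => (a+(m:ℝ))/((m:ℝ)+1)) Filter.atTop (nhds 1) := by
    have heq : (fun m:ℕ => (a+(m:ℝ))/((m:ℝ)+1)) = fun m : ℕ => 1 + (a-1)/((m:ℝ)+1) := by
      funext m
      have : ((m:ℝ)+1) ≠ 0 := by positivity
      field_simp; ring
    rw [heq]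
    simpa using tendsto_const_nhds.add (l0.const_div_atTop (a-1))
  have l2 : Filter.Tendsto (fun m:ℕ => (b+(m:ℝ))/(c+(m:ℝ))) Filter.atTop (nhds 1) := by
    have heq : (fun m:ℕ => (b+(m:ℝ))/(c+(m:ℝ))) = fun m : ℕ => 1 + (b-c)/(c+(m:ℝ)) := by
      funext m
      have : (c+(m:ℝ)) ≠ 0 := by positivity
      field_simp; ring
    rw [heq]
    simpa using tendsto_const_nhds.add (l0'.const_div_atTop (b-c))
  have hT : Filter.Tendsto (fun m:ℕ => (a+m)*(b+m)/((c+m)*((m:ℝ)+1)) * z)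
      Filter.atTop (nhds z) := by
    have heq : (fun m:ℕ => (a+m)*(b+m)/((c+m)*((m:ℝ)+1)) * z)
        = fun m : ℕ => ((a+(m:ℝ))/((m:ℝ)+1)) * ((b+(m:ℝ))/(c+(m:ℝ))) * z := by
      funext m
      have h3 : (c+(m:ℝ)) ≠ 0 := by positivity
      have h4 : ((m:ℝ)+1) ≠ 0 := by positivity
      field_simp

    rw [heq]
    simpa using ((l1.mul l2).mul_const z)
  have hr1 : (1+z)/2 < 1 := by linarith
  refine summable_of_ratio_norm_eventually_le hr1 ?_
  filter_upwards [hT.eventually_lt_const (show z < (1+z)/2 by linarith)] with m hm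
  rw [Real.norm_of_nonneg (htpos (m+1)).le, Real.norm_of_nonneg (htpos m).le]
  have hsucc' : t (m+1) = t m * ((a+m)*(b+m)/((c+m)*((m:ℝ)+1)) * z) := t_succ hc m
  rw [hsucc']
  calc t m * ((a+m)*(b+m)/((c+m)*((m:ℝ)+1)) * z)
      ≤ t m * ((1+z)/2) := mul_le_mul_of_nonneg_left hm.le (htpos m).le
    _ = (1+z)/2 * t m := by ring

lemma hyp_not_summable {a b c : ℝ} (ha : 0 < a) (hb : 0 < b) (hcab : c = a + b) :
    ¬ Summable (fun m : ℕ => risingFac a m * risingFac b m /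
      (risingFac c m * (m.factorial:ℝ))) := by
  subst hcab
  set c := a + b with hc'
  have hc : 0 < c := by rw [hc']; linarith
  set t : ℕ → ℝ := fun m => risingFac a m * risingFac b m /
      (risingFac c m * (m.factorial:ℝ)) with ht
  have htpos : ∀ m, 0 < t m := by
    intro m
    have := risingFac_pos ha m; have := risingFac_pos hb m; have := risingFac_pos hc m
    have : (0:ℝ) < (m.factorial:ℝ) := by positivity
    simp only [ht]; positivity
  obtain ⟨α, hαpos, hαc⟩ : ∃ α : ℝ, 0 < α ∧ α*(1+c) = a*b :=
    ⟨a*b/(1+c), by positivity, by field_simp⟩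
  have hab : a*b = α + α*c := by linarith [hαc]
  -- lower bound by induction
  have hlow : ∀ m : ℕ, α/((m:ℝ)+α) ≤ t m := by
    intro m
    induction m with
    | zero =>
        have : t 0 = 1 := by simp [ht, risingFac_zero]
        rw [this]; simp
        rw [div_le_one (by positivity)]
    | succ n ih =>
        have hcast : (((n+1):ℕ):ℝ) = (n:ℝ)+1 := by push_cast; ring
        rw [hcast]
        have hsucc : t (n+1) = t n * ((a+n)*(b+n)/((c+n)*((n:ℝ)+1)) * 1) := by
          have := t_succ (a := a) (b := b) (z := (1:ℝ)) hc n
          simpa [one_pow] using this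
        rw [hsucc]
        have hkey : ((n:ℝ)+α)/((n:ℝ)+1+α) ≤ (a+n)*(b+n)/((c+n)*((n:ℝ)+1)) * 1 := by
          rw [mul_one, div_le_div_iff₀ (by positivity) (by positivity)]
          have hn0 : (0:ℝ) ≤ (n:ℝ) := Nat.cast_nonneg n
          have hid : (a+(n:ℝ))*(b+(n:ℝ))*((n:ℝ)+1+α)
              = ((n:ℝ)+α)*((c+(n:ℝ))*((n:ℝ)+1)) + ((n:ℝ)*(α*c) + α*(1+α) + α^2*c) := by
            rw [hc']
            linear_combination ((n:ℝ)+1+α) * hab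
          rw [hid]
          have h1 : 0 ≤ (n:ℝ)*(α*c) := by positivity
          have h2 : 0 < α*(1+α) := by positivity
          have h3 : 0 ≤ α^2*c := by positivity
          linarith
        calc α/((n:ℝ)+1+α) = (α/((n:ℝ)+α)) * (((n:ℝ)+α)/((n:ℝ)+1+α)) := by
              rw [div_mul_div_comm]
              rw [mul_comm ((n:ℝ)+α) _]
              rw [mul_div_mul_right _ _ (by positivity : ((n:ℝ)+α) ≠ 0)]
          _ ≤ t n * ((a+n)*(b+n)/((c+n)*((n:ℝ)+1)) * 1) := by
              apply mul_le_mul ih hkey (by positivity) (htpos n).le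
  intro hsum
  -- compare with harmonic series
  have h2 : Summable (fun m : ℕ => α/((m:ℝ)+α)) :=
    Summable.of_nonneg_of_le (fun m => by positivity) hlow hsum
  have h3 : Summable (fun m : ℕ => (α/(1+α)) * (1/((m:ℝ)+1))) := by
    refine Summable.of_nonneg_of_le (fun m => by positivity) (fun m => ?_) h2
    rw [div_mul_div_comm, mul_one, div_le_div_iff₀ (by positivity) (by positivity)]
    have hn0 : (0:ℝ) ≤ (m:ℝ) := Nat.cast_nonneg m
    nlinarith [mul_nonneg (mul_nonneg hαpos.le hαpos.le) hn0, mul_pos hαpos hαpos]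
  have h4 : Summable (fun m : ℕ => 1/((m:ℝ)+1)) := by
    have hne : (α/(1+α)) ≠ 0 := by positivity
    exact (summable_mul_left_iff hne).mp h3
  have h5 : Summable (fun m : ℕ => 1/((m:ℕ):ℝ)) := by
    rw [← summable_nat_add_iff 1]
    simpa using h4
  exact Real.not_summable_one_div_natCast h5

lemma bessel_terms_summable {ν : ℝ} (hν : -1/2 < ν) {y : ℝ} (hy : 0 < y) :
    Summable (fun m : ℕ => (1 / ((m.factorial : ℝ) * Real.Gamma ((m : ℝ) + ν + 1))) *
      y ^ (2*(m:ℝ) + ν)) := by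
  set u : ℕ → ℝ := fun m => (1 / ((m.factorial : ℝ) * Real.Gamma ((m : ℝ) + ν + 1))) *
      y ^ (2*(m:ℝ) + ν) with hu
  have hupos : ∀ m, 0 < u m := by
    intro m
    have h1 : (0:ℝ) < Real.Gamma ((m:ℝ) + ν + 1) :=
      Real.Gamma_pos_of_pos (by have := (Nat.cast_nonneg m : (0:ℝ) ≤ m); linarith)
    have h2 : (0:ℝ) < (m.factorial:ℝ) := by positivity
    have h3 : (0:ℝ) < y ^ (2*(m:ℝ) + ν) := Real.rpow_pos_of_pos hy _
    simp only [hu]; positivity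
  have husucc : ∀ m : ℕ, u (m+1) = u m * (y^2 / (((m:ℝ)+1)*((m:ℝ)+ν+1))) := by
    intro m
    have hg : Real.Gamma (((m+1):ℕ) + ν + 1) = ((m:ℝ)+ν+1) * Real.Gamma ((m:ℝ) + ν + 1) := by
      have h0 : ((m:ℝ)+ν+1) ≠ 0 := by
        have := (Nat.cast_nonneg m : (0:ℝ) ≤ m); intro h; linarith [h]
      rw [show (((m+1):ℕ):ℝ) + ν + 1 = ((m:ℝ) + ν + 1) + 1 by push_cast; ring,
        Real.Gamma_add_one h0]
    have hp : y ^ (2*(((m+1):ℕ):ℝ) + ν) = y ^ (2*(m:ℝ) + ν) * y^2 := by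
      rw [show 2*(((m+1):ℕ):ℝ) + ν = (2*(m:ℝ) + ν) + ((2:ℕ):ℝ) by push_cast; ring,
        Real.rpow_add hy, Real.rpow_natCast]
    simp only [hu]
    rw [hg, hp, Nat.factorial_succ]
    have h1 : Real.Gamma ((m:ℝ) + ν + 1) ≠ 0 :=
      (Real.Gamma_pos_of_pos (by have := (Nat.cast_nonneg m : (0:ℝ) ≤ m); linarith)).ne'
    have h2 : ((m.factorial:ℝ)) ≠ 0 := by positivity
    have h3 : ((m:ℝ)+ν+1) ≠ 0 := by
      have := (Nat.cast_nonneg m : (0:ℝ) ≤ m); intro h; linarith [h]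
    have h4 : ((m:ℝ)+1) ≠ 0 := by positivity
    push_cast
    field_simp
  have hT : Filter.Tendsto (fun m : ℕ => y^2 / (((m:ℝ)+1)*((m:ℝ)+ν+1))) Filter.atTop (nhds 0) := by
    apply Filter.Tendsto.const_div_atTop
    apply Filter.Tendsto.atTop_mul_atTop₀
    · exact Filter.tendsto_atTop_add_const_right _ _ tendsto_natCast_atTop_atTop
    · simpa [add_assoc] using
        Filter.tendsto_atTop_add_const_right Filter.atTop (ν+1)
          (tendsto_natCast_atTop_atTop (R := ℝ))
  refine summable_of_ratio_norm_eventually_le (r := 1/2) (by norm_num) ?_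
  filter_upwards [hT.eventually_lt_const (show (0:ℝ) < 1/2 by norm_num)] with m hm
  rw [Real.norm_of_nonneg (hupos (m+1)).le, Real.norm_of_nonneg (hupos m).le, husucc m]
  calc u m * (y^2 / (((m:ℝ)+1)*((m:ℝ)+ν+1))) ≤ u m * (1/2) :=
        mul_le_mul_of_nonneg_left hm.le (hupos m).le
    _ = 1/2 * u m := by ring
theorem besselI_laplace_hypergeometric (A B ν : ℝ)
    (hA : 0 < A) (hB : 0 < B) (hν : -1/2 < ν) (hAB : A ≤ 1 + B) :
    ∫ x in Set.Ioi (0:ℝ), besselI ν (A*x) * Real.exp (-B*x) * x ^ (-(1:ℝ)/2) * Real.exp (-x)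
      = (2:ℝ)^(-ν) / Real.sqrt (1+B) * (A^2 / (1+B)^2) ^ (ν/2) *
        (Real.Gamma (1/2 + ν) / Real.Gamma (1 + ν)) *
        hyp2F1 ((1 + 2*ν)/4) ((3 + 2*ν)/4) (1 + ν) (A^2 / (1+B)^2) := by
  have hK : (0:ℝ) < 1 + B := by linarith
  set K : ℝ := 1 + B with hKdef
  have hGpos : ∀ m : ℕ, 0 < Real.Gamma ((m:ℝ) + ν + 1) := fun m =>
    Real.Gamma_pos_of_pos (by have := (Nat.cast_nonneg m : (0:ℝ) ≤ m); linarith)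
  set F : ℕ → ℝ → ℝ := fun m x =>
    1 / ((m.factorial : ℝ) * Real.Gamma ((m:ℝ) + ν + 1)) * (A/2) ^ (2*(m:ℝ) + ν)
      * (x ^ (2*(m:ℝ) + ν - 1/2) * Real.exp (-(K*x))) with hF
  set L : ℕ → ℝ := fun m =>
    1 / ((m.factorial : ℝ) * Real.Gamma ((m:ℝ) + ν + 1)) * (A/2) ^ (2*(m:ℝ) + ν)
      * ((1/K) ^ (2*(m:ℝ) + ν + 1/2) * Real.Gamma (2*(m:ℝ) + ν + 1/2)) with hL
  set C : ℝ := (2:ℝ)^(-ν) / Real.sqrt K * (A^2 / K^2) ^ (ν/2) *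
        (Real.Gamma (1/2 + ν) / Real.Gamma (1 + ν)) with hC
  set tt : ℕ → ℝ := fun m => risingFac ((1 + 2*ν)/4) m * risingFac ((3 + 2*ν)/4) m /
      (risingFac (1 + ν) m * (m.factorial:ℝ)) * (A^2 / K^2)^m with htt
  have hLC : ∀ m, L m = C * tt m := fun m => term_eq A K ν hA hK hν m
  -- pointwise expansion of the integrand
  have hptw : ∀ x ∈ Set.Ioi (0:ℝ),
      besselI ν (A*x) * Real.exp (-B*x) * x ^ (-(1:ℝ)/2) * Real.exp (-x) = ∑' m, F m x := by
    intro x hx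
    rw [Set.mem_Ioi] at hx
    rw [besselI, ← tsum_mul_right, ← tsum_mul_right, ← tsum_mul_right]
    refine tsum_congr fun m => ?_
    have hAx2 : A*x/2 = (A/2)*x := by ring
    rw [hAx2, Real.mul_rpow (by positivity) hx.le]
    have hxp : x^(2*(m:ℝ)+ν) * x^(-(1:ℝ)/2) = x^(2*(m:ℝ)+ν-1/2) := by
      rw [← Real.rpow_add hx]; ring_nf
    have hexp : Real.exp (-B*x) * Real.exp (-x) = Real.exp (-(K*x)) := by
      rw [← Real.exp_add]; congr 1; rw [hKdef]; ring
    simp only [hF]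
    rw [← hxp, ← hexp]
    ring
  have hFnonneg : ∀ m, ∀ x ∈ Set.Ioi (0:ℝ), 0 ≤ F m x := by
    intro m x hx
    rw [Set.mem_Ioi] at hx
    have h1 := hGpos m
    have h2 : (0:ℝ) < (m.factorial:ℝ) := by positivity
    have h3 : (0:ℝ) < (A/2) ^ (2*(m:ℝ) + ν) := Real.rpow_pos_of_pos (by linarith) _
    have h4 : (0:ℝ) < x ^ (2*(m:ℝ) + ν - 1/2) := Real.rpow_pos_of_pos hx _
    simp only [hF]
    positivity
  have hFint : ∀ m, IntegrableOn (F m) (Set.Ioi 0) volume := by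
    intro m
    have hs : (-1:ℝ) < 2*(m:ℝ)+ν-1/2 := by
      have := (Nat.cast_nonneg m : (0:ℝ) ≤ m); linarith
    have h := integrableOn_rpow_mul_exp_neg_mul_rpow hs zero_lt_one hK
    simp only [Real.rpow_one, neg_mul] at h
    exact h.const_mul _
  have hFmeas : ∀ m, AEStronglyMeasurable (F m) (volume.restrict (Set.Ioi 0)) :=
    fun m => (hFint m).aestronglyMeasurable
  have hFI : ∀ m, (∫ x in Set.Ioi (0:ℝ), F m x) = L m := by
    intro m
    have hspos : (0:ℝ) < 2*(m:ℝ)+ν+1/2 := by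
      have := (Nat.cast_nonneg m : (0:ℝ) ≤ m); linarith
    simp only [hF, hL]
    rw [MeasureTheory.integral_const_mul]
    congr 1
    have he : (2*(m:ℝ)+ν-1/2) = (2*(m:ℝ)+ν+1/2) - 1 := by ring
    rw [he, Real.integral_rpow_mul_exp_neg_mul_Ioi hspos hK]
  have hLnn : ∀ m, 0 ≤ L m := by
    intro m
    rw [← hFI m]
    exact setIntegral_nonneg measurableSet_Ioi (hFnonneg m)
  have hofReal : ∀ m, (∫⁻ x in Set.Ioi (0:ℝ), ENNReal.ofReal (F m x)) = ENNReal.ofReal (L m) := by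
    intro m
    rw [← MeasureTheory.ofReal_integral_eq_lintegral_ofReal (hFint m)
      ((ae_restrict_iff' measurableSet_Ioi).mpr (ae_of_all _ (hFnonneg m))), hFI m]
  have hnorm : ∀ m, (∫⁻ x in Set.Ioi (0:ℝ), (‖F m x‖₊ : ℝ≥0∞)) = ENNReal.ofReal (L m) := by
    intro m
    rw [← hofReal m]
    apply lintegral_congr_ae
    filter_upwards [ae_restrict_mem measurableSet_Ioi] with x hx
    exact Real.enorm_eq_ofReal (hFnonneg m x hx)
  have ha' : (0:ℝ) < (1 + 2*ν)/4 := by linarith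
  have hb' : (0:ℝ) < (3 + 2*ν)/4 := by linarith
  have hc' : (0:ℝ) < 1 + ν := by linarith
  rcases lt_or_eq_of_le hAB with hlt | heq
  · -- convergent case
    have hz0 : 0 < A^2/K^2 := by positivity
    have hz1 : A^2/K^2 < 1 := by
      rw [div_lt_one (by positivity)]; nlinarith
    have hts : Summable tt := hyp_summable ha' hb' hc' hz0 hz1
    have hLs : Summable L := by
      have hfun : L = fun m => C * tt m := funext hLC
      rw [hfun]; exact hts.mul_left C
    have hne : (∑' m, ∫⁻ x in Set.Ioi (0:ℝ), (‖F m x‖₊ : ℝ≥0∞)) ≠ ⊤ := by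
      rw [tsum_congr hnorm, ← ENNReal.ofReal_tsum_of_nonneg hLnn hLs]
      exact ENNReal.ofReal_ne_top
    rw [setIntegral_congr_fun measurableSet_Ioi hptw,
      MeasureTheory.integral_tsum hFmeas hne, tsum_congr hFI, tsum_congr hLC,
      tsum_mul_left]
    simp only [htt, hyp2F1]
  · -- divergent case : both sides are zero
    have hz : A^2/K^2 = 1 := by rw [heq]; field_simp
    have httc : tt = fun m => risingFac ((1 + 2*ν)/4) m * risingFac ((3 + 2*ν)/4) m /
        (risingFac (1 + ν) m * (m.factorial:ℝ)) := by
      funext m; simp only [htt, hz, one_pow, mul_one]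
    have hnts : ¬ Summable tt := by
      rw [httc]
      exact hyp_not_summable ha' hb' (by ring)
    have hCpos : 0 < C := by
      have h1 : (0:ℝ) < (2:ℝ)^(-ν) := Real.rpow_pos_of_pos (by norm_num) _
      have h2 : (0:ℝ) < Real.sqrt K := Real.sqrt_pos.mpr hK
      have h3 : (0:ℝ) < (A^2/K^2) ^ (ν/2) := Real.rpow_pos_of_pos (by positivity) _
      have h4 : (0:ℝ) < Real.Gamma (1/2 + ν) := Real.Gamma_pos_of_pos (by linarith)
      have h5 : (0:ℝ) < Real.Gamma (1 + ν) := Real.Gamma_pos_of_pos hc'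
      rw [hC]; positivity
    have hLns : ¬ Summable L := by
      intro hS
      apply hnts
      have hfun : tt = fun m => C⁻¹ * L m := by
        funext m
        rw [hLC m, ← mul_assoc, inv_mul_cancel₀ hCpos.ne', one_mul]
      rw [hfun]
      exact hS.mul_left _
    -- RHS is zero
    have hR : hyp2F1 ((1 + 2*ν)/4) ((3 + 2*ν)/4) (1 + ν) (A^2 / K^2) = 0 := by
      rw [hyp2F1]
      apply tsum_eq_zero_of_not_summable
      rw [htt] at hnts
      exact hnts
    -- LHS is zero : the integrand is not integrable
    have hnint : ¬ IntegrableOn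
        (fun x => besselI ν (A*x) * Real.exp (-B*x) * x ^ (-(1:ℝ)/2) * Real.exp (-x))
        (Set.Ioi 0) volume := by
      intro hint
      have hfin := hint.2
      rw [MeasureTheory.hasFiniteIntegral_iff_norm] at hfin
      -- compute the lintegral as an infinite sum
      have hsumx : ∀ x ∈ Set.Ioi (0:ℝ), Summable (fun m => F m x) := by
        intro x hx
        rw [Set.mem_Ioi] at hx
        have hbase : (0:ℝ) < A*x/2 := by positivity
        have h := (bessel_terms_summable hν hbase).mul_right
          (x ^ (-(1:ℝ)/2) * Real.exp (-(K*x)))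
        refine h.congr fun m => ?_
        have hAx2 : A*x/2 = (A/2)*x := by ring
        rw [hAx2, Real.mul_rpow (by positivity) hx.le]
        have hxp : x^(2*(m:ℝ)+ν) * x^(-(1:ℝ)/2) = x^(2*(m:ℝ)+ν-1/2) := by
          rw [← Real.rpow_add hx]; ring_nf
        simp only [hF]
        rw [← hxp]
        ring
      have hlint : (∫⁻ x in Set.Ioi (0:ℝ),
          ENNReal.ofReal ‖besselI ν (A*x) * Real.exp (-B*x) * x ^ (-(1:ℝ)/2) * Real.exp (-x)‖)
          = ∑' m, ENNReal.ofReal (L m) := by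
        rw [← tsum_congr hofReal, ← MeasureTheory.lintegral_tsum
          (f := fun m x => ENNReal.ofReal (F m x))
          (fun m => (ENNReal.measurable_ofReal.comp_aemeasurable (hFmeas m).aemeasurable))]
        apply lintegral_congr_ae
        filter_upwards [ae_restrict_mem measurableSet_Ioi] with x hx
        have hnn : 0 ≤ ∑' m, F m x := tsum_nonneg fun m => hFnonneg m x hx
        rw [hptw x hx, Real.norm_of_nonneg hnn,
          ENNReal.ofReal_tsum_of_nonneg (fun m => hFnonneg m x hx) (hsumx x hx)]
      rw [hlint] at hfin
      have : Summable L := by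
        have hne := hfin.ne
        have h1 := ENNReal.summable_toReal hne
        refine h1.congr fun m => ?_
        rw [ENNReal.toReal_ofReal (hLnn m)]
      exact hLns this
    rw [MeasureTheory.integral_undef hnint, hR, mul_zero]
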